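/- Hoeffding upper-tail bound for the binomial distribution: Let n ≥ 1, p ∈ [0,1], and let X be distributed according to the binomial distribution with n trials and success probability p. Then for every real k with n·p ≤ k, the probability that X ≥ k is at most exp(−2·(n·p − k)²/n). -/

import Mathlib

open Real

lemma hoeffding_lemma (p : ℝ) (hp0 : 0 ≤ p) (hp1 : p ≤ 1) (t : ℝ) (ht : 0 ≤ t) :
    1 - p + p * Real.exp t ≤ Real.exp (p * t + t ^ 2 / 8) := by
  have hpos : ∀ s : ℝ, 0 < 1 - p + p * Real.exp s := by
    intro s
    have := Real.exp_pos s
    rcases lt_or_eq_of_le hp1 with h | h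
    · nlinarith
    · nlinarith
  -- h s := 1 - p + p * exp s, its derivative is p * exp s
  have hd_h : ∀ s : ℝ, HasDerivAt (fun s => 1 - p + p * Real.exp s) (p * Real.exp s) s := by
    intro s
    exact ((Real.hasDerivAt_exp s).const_mul p).const_add (1 - p)
  set g : ℝ → ℝ := fun s => p + s / 4 - p * Real.exp s / (1 - p + p * Real.exp s) with hg
  have hd_g : ∀ s : ℝ, HasDerivAt g
      (1 / 4 - (p * Real.exp s * (1 - p + p * Real.exp s)
        - p * Real.exp s * (p * Real.exp s)) / (1 - p + p * Real.exp s) ^ 2) s := by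
    intro s
    have h1 : HasDerivAt (fun s : ℝ => p + s / 4) (1 / 4) s := by
      simpa using ((hasDerivAt_id s).div_const 4).const_add p
    have h2 : HasDerivAt (fun s => p * Real.exp s / (1 - p + p * Real.exp s))
        ((p * Real.exp s * (1 - p + p * Real.exp s)
          - p * Real.exp s * (p * Real.exp s)) / (1 - p + p * Real.exp s) ^ 2) s :=
      ((Real.hasDerivAt_exp s).const_mul p).div (hd_h s) (hpos s).ne'
    exact h1.sub h2
  have hg_deriv_nonneg : ∀ s : ℝ, 0 ≤ 1 / 4 - (p * Real.exp s * (1 - p + p * Real.exp s)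
        - p * Real.exp s * (p * Real.exp s)) / (1 - p + p * Real.exp s) ^ 2 := by
    intro s
    rw [sub_nonneg, div_le_iff₀ (pow_pos (hpos s) 2)]
    nlinarith [sq_nonneg (p * Real.exp s - (1 - p)), Real.exp_pos s, hpos s]
  have hg_mono : Monotone g := by
    apply monotone_of_deriv_nonneg
    · exact fun s => (hd_g s).differentiableAt
    · intro s
      rw [(hd_g s).deriv]
      exact hg_deriv_nonneg s
  have hg0 : g 0 = 0 := by
    simp only [hg]
    rw [Real.exp_zero]
    field_simp
    ring
  have hg_nonneg : ∀ s : ℝ, 0 ≤ s → 0 ≤ g s := fun s hs => hg0 ▸ hg_mono hs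
  set f : ℝ → ℝ := fun s => p * s + s ^ 2 / 8 - Real.log (1 - p + p * Real.exp s) with hf
  have hd_f : ∀ s : ℝ, HasDerivAt f (g s) s := by
    intro s
    have h1 : HasDerivAt (fun s : ℝ => p * s + s ^ 2 / 8) (p + s / 4) s := by
      have : HasDerivAt (fun s : ℝ => p * s) p s := by
        simpa using (hasDerivAt_id s).const_mul p
      have h2 : HasDerivAt (fun s : ℝ => s ^ 2 / 8) (s / 4) s := by
        have : HasDerivAt (fun x : ℝ => x ^ 2 / 8) ((2 : ℕ) * s ^ (2 - 1) / 8) s :=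
          (hasDerivAt_pow 2 s).div_const 8
        convert this using 1
        ring
      exact this.add h2
    have h2 : HasDerivAt (fun s => Real.log (1 - p + p * Real.exp s))
        (p * Real.exp s / (1 - p + p * Real.exp s)) s := (hd_h s).log (hpos s).ne'
    exact h1.sub h2
  have hf_mono : MonotoneOn f (Set.Ici 0) := by
    apply monotoneOn_of_deriv_nonneg (convex_Ici 0)
    · exact Continuous.continuousOn (by
        apply Continuous.sub (by continuity)
        exact (continuous_const.add (continuous_const.mul Real.continuous_exp)).log
          fun s => (hpos s).ne')
    · intro s _
      exact (hd_f s).differentiableAt.differentiableWithinAt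
    · intro s hs
      rw [(hd_f s).deriv]
      exact hg_nonneg s (le_of_lt (by simpa using hs))
  have hf0 : f 0 = 0 := by simp [hf]
  have hft : 0 ≤ f t := hf0 ▸ hf_mono Set.self_mem_Ici ht ht
  have : Real.log (1 - p + p * Real.exp t) ≤ p * t + t ^ 2 / 8 := by
    simp only [hf] at hft; linarith
  calc 1 - p + p * Real.exp t = Real.exp (Real.log (1 - p + p * Real.exp t)) :=
        (Real.exp_log (hpos t)).symm
    _ ≤ _ := Real.exp_le_exp.mpr this


lemma real_binomial_tail (n : ℕ) (hn : 1 ≤ n) (p : ℝ) (hp0 : 0 ≤ p) (hp1 : p ≤ 1)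
    (k : ℝ) (hk : n * p ≤ k)
    (hoef : ∀ t : ℝ, 0 ≤ t → 1 - p + p * Real.exp t ≤ Real.exp (p * t + t ^ 2 / 8)) :
    (∑ j ∈ Finset.range (n + 1),
        if k ≤ (j : ℝ) then (n.choose j : ℝ) * p ^ j * (1 - p) ^ (n - j) else 0)
      ≤ Real.exp (-2 * (n * p - k) ^ 2 / n) := by
  have hn0 : (0:ℝ) < n := by exact_mod_cast hn
  set t : ℝ := 4 * (k - n * p) / n with hts
  have ht : 0 ≤ t := div_nonneg (by linarith) hn0.le
  have step1 : ∀ j ∈ Finset.range (n+1),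
      (if k ≤ (j:ℝ) then (n.choose j:ℝ) * p ^ j * (1-p) ^ (n-j) else 0)
      ≤ Real.exp (-(t*k)) * ((p * Real.exp t) ^ j * (1-p) ^ (n-j) * (n.choose j : ℝ)) := by
    intro j _
    have hnn : 0 ≤ (n.choose j:ℝ) * p ^ j * (1-p) ^ (n-j) :=
      mul_nonneg (mul_nonneg (Nat.cast_nonneg _) (pow_nonneg hp0 _))
        (pow_nonneg (by linarith) _)
    have hbase : Real.exp (-(t*k)) * ((p * Real.exp t) ^ j * (1-p) ^ (n-j) * (n.choose j:ℝ))
        = ((n.choose j:ℝ) * p ^ j * (1-p) ^ (n-j)) * Real.exp (t * ((j:ℝ) - k)) := by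
      have e1 : Real.exp (t * ((j:ℝ) - k)) = Real.exp ((j:ℝ) * t) * Real.exp (-(t*k)) := by
        rw [← Real.exp_add]; congr 1; ring
      rw [mul_pow, ← Real.exp_nat_mul, e1]; ring
    rw [hbase]
    split_ifs with h
    · exact le_mul_of_one_le_right hnn (Real.one_le_exp (mul_nonneg ht (by linarith)))
    · exact mul_nonneg hnn (Real.exp_nonneg _)
  calc (∑ j ∈ Finset.range (n + 1),
        if k ≤ (j : ℝ) then (n.choose j : ℝ) * p ^ j * (1 - p) ^ (n - j) else 0)
      ≤ ∑ j ∈ Finset.range (n+1),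
        Real.exp (-(t*k)) * ((p * Real.exp t) ^ j * (1-p) ^ (n-j) * (n.choose j : ℝ)) :=
        Finset.sum_le_sum step1
    _ = Real.exp (-(t*k)) * (p * Real.exp t + (1-p)) ^ n := by
        rw [← Finset.mul_sum, ← add_pow]
    _ ≤ Real.exp (-(t*k)) * (Real.exp (p*t + t^2/8)) ^ n := by
        have hb : 0 ≤ p * Real.exp t + (1-p) :=
          add_nonneg (mul_nonneg hp0 (Real.exp_nonneg _)) (by linarith)
        have := hoef t ht
        gcongr
        linarith
    _ = Real.exp (-(t*k) + n * (p*t + t^2/8)) := by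
        rw [← Real.exp_nat_mul, ← Real.exp_add]
    _ = Real.exp (-2 * (n * p - k) ^ 2 / n) := by
        congr 1
        rw [hts]
        field_simp
        ring

/-- **Hoeffding upper-tail bound for the binomial distribution**: if
`X ~ Binomial(n, p)` and `n·p ≤ k`, then `Pr[X ≥ k] ≤ exp(−2(np − k)²/n)`. -/
theorem binomial_upper_tail (n : ℕ) (hn : 1 ≤ n) (p : ℝ) (hp0 : 0 ≤ p) (hp1 : p ≤ 1)
    (k : ℝ) (hk : n * p ≤ k) :
    (∑ j : Fin (n + 1),
        if k ≤ (j : ℝ) then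
          PMF.binomial (Real.toNNReal p) (Real.toNNReal_le_one.mpr hp1) n j
        else 0)
      ≤ ENNReal.ofReal (Real.exp (-2 * (n * p - k) ^ 2 / n)) := by
  have hbin : ∀ j : Fin (n + 1),
      PMF.binomial (Real.toNNReal p) (Real.toNNReal_le_one.mpr hp1) n j
        = ENNReal.ofReal ((n.choose j : ℝ) * p ^ (j : ℕ) * (1 - p) ^ (n - (j : ℕ))) := by
    intro j
    rw [PMF.binomial_apply]
    rw [show ((Real.toNNReal p : ENNReal)) = ENNReal.ofReal p from rfl]
    rw [Fin.val_last, ← ENNReal.ofReal_one, ← ENNReal.ofReal_sub _ hp0,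
      ← ENNReal.ofReal_pow hp0, ← ENNReal.ofReal_pow (by linarith),
      ← ENNReal.ofReal_natCast (n.choose j),
      ← ENNReal.ofReal_mul (pow_nonneg hp0 _),
      ← ENNReal.ofReal_mul (mul_nonneg (pow_nonneg hp0 _) (pow_nonneg (by linarith) _))]
    congr 1
    ring
  have hterm : ∀ j : Fin (n + 1),
      (if k ≤ (j : ℝ) then
          PMF.binomial (Real.toNNReal p) (Real.toNNReal_le_one.mpr hp1) n j
        else 0)
      = ENNReal.ofReal
          (if k ≤ ((j : ℕ) : ℝ) then (n.choose j : ℝ) * p ^ (j : ℕ) * (1 - p) ^ (n - (j : ℕ))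
            else 0) := by
    intro j
    split_ifs with h
    · exact hbin j
    · simp
  calc (∑ j : Fin (n + 1),
        if k ≤ (j : ℝ) then
          PMF.binomial (Real.toNNReal p) (Real.toNNReal_le_one.mpr hp1) n j
        else 0)
      = ∑ j : Fin (n + 1), ENNReal.ofReal
          (if k ≤ ((j : ℕ) : ℝ) then (n.choose j : ℝ) * p ^ (j : ℕ) * (1 - p) ^ (n - (j : ℕ))
            else 0) := Finset.sum_congr rfl fun j _ => hterm j
    _ = ENNReal.ofReal (∑ j ∈ Finset.range (n + 1),
          if k ≤ (j : ℝ) then (n.choose j : ℝ) * p ^ j * (1 - p) ^ (n - j) else 0) := by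
        rw [← Fin.sum_univ_eq_sum_range (fun j : ℕ =>
          if k ≤ (j : ℝ) then (n.choose j : ℝ) * p ^ j * (1 - p) ^ (n - j) else 0) (n + 1)]
        rw [ENNReal.ofReal_sum_of_nonneg]
        intro j _
        split_ifs with h
        · exact mul_nonneg (mul_nonneg (Nat.cast_nonneg _) (pow_nonneg hp0 _))
            (pow_nonneg (by linarith) _)
        · exact le_refl 0
    _ ≤ ENNReal.ofReal (Real.exp (-2 * (n * p - k) ^ 2 / n)) :=
        ENNReal.ofReal_le_ofReal
          (real_binomial_tail n hn p hp0 hp1 k hk (fun t ht => hoeffding_lemma p hp0 hp1 t ht))
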